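/- Let O be a discrete valuation ring with uniformizer ϖ and fraction field K, let V be a finite-dimensional K-vector space, and let q be a natural number. Let (L_i)_{i∈ℤ} be O-submodules of V such that for every i: L_i ⊆ L_{i+1}, L_i is finitely generated over O, L_i spans V over K, and L_i = ϖ·L_{i+q+1}. Let (N_i)_{i∈ℤ} be O-submodules of V with L_{i−1} ⊆ N_i ⊆ L_i and N_i = ϖ·N_{i+q+1} for all i. Then there exists a K-linear subspace W of V such that for every i ∈ ℤ: (W ∩ L_i) + L_{i−1} = N_i. -/

import Mathlib

open Pointwise

open Submodule in
private lemma exists_min_gen {O V : Type*} [CommRing O] [AddCommGroup V] [Module O V]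
    (P Q : Submodule O V) (hPQ : P ≤ Q) (hQ : Q.FG) :
    ∃ S : Finset V, ↑S ⊆ (Q : Set V) ∧ span O ↑S ⊔ P = Q ∧
      ∀ a : V → O, (∑ s ∈ S, a s • s) ∈ P → ∀ s ∈ S, ¬ IsUnit (a s) := by
  classical
  have hne : ∃ n : ℕ, ∃ S : Finset V, S.card = n ∧ ↑S ⊆ (Q : Set V) ∧ span O ↑S ⊔ P = Q := by
    obtain ⟨T, hT⟩ := hQ
    exact ⟨T.card, T, rfl, by rw [← hT]; exact subset_span,
      by rw [hT, sup_eq_left.mpr hPQ]⟩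
  obtain ⟨S, hcard, hSQ, hspan⟩ := Nat.find_spec hne
  refine ⟨S, hSQ, hspan, ?_⟩
  intro a ha s hs hunit
  obtain ⟨u, hu⟩ := hunit
  have herase : span O ↑(S.erase s) ⊔ P = Q := by
    apply le_antisymm
    · rw [← hspan]
      exact sup_le_sup_right (span_mono (by exact_mod_cast S.erase_subset s)) P
    · rw [← hspan]
      apply sup_le _ le_sup_right
      rw [span_le]
      intro t ht
      rcases eq_or_ne t s with rfl | hts
      · have h1 : a t • t = (∑ x ∈ S, a x • x) - ∑ x ∈ S.erase t, a x • x := by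
          rw [← Finset.sum_erase_add S _ hs]; abel
        have h2 : a t • t ∈ span O ↑(S.erase t) ⊔ P := by
          rw [h1]
          exact sub_mem (le_sup_right (α := Submodule O V) ha)
            (le_sup_left (α := Submodule O V)
              (sum_mem fun x hx => smul_mem _ _ (subset_span hx)))
        have h3 : t = (↑u⁻¹ : O) • (a t • t) := by
          rw [smul_smul, ← hu, Units.inv_mul, one_smul]
        have h4 : (↑u⁻¹ : O) • (a t • t) ∈ span O ↑(S.erase t) ⊔ P :=
          Submodule.smul_mem _ _ h2
        rwa [← h3] at h4
      · exact le_sup_left (α := Submodule O V)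
          (subset_span (Finset.mem_coe.2 (Finset.mem_erase.2 ⟨hts, ht⟩)))
  have hlt : (S.erase s).card < Nat.find hne := by
    rw [← hcard]; exact Finset.card_erase_lt_of_mem hs
  exact Nat.find_min hne hlt ⟨S.erase s, rfl, fun t ht => hSQ (S.erase_subset s ht), herase⟩

theorem exists_subspace_inter_sup_eq {O : Type*} [CommRing O] [IsDomain O]
    [IsDiscreteValuationRing O] (ϖ : O) (hϖ : Irreducible ϖ)
    {K : Type*} [Field K] [Algebra O K] [IsFractionRing O K]
    {V : Type*} [AddCommGroup V] [Module K V] [Module O V] [IsScalarTower O K V]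
    [FiniteDimensional K V]
    (q : ℕ) (L N : ℤ → Submodule O V)
    (hLmono : ∀ i : ℤ, L i ≤ L (i + 1))
    (hLfg : ∀ i : ℤ, (L i).FG)
    (hLspan : ∀ i : ℤ, Submodule.span K (L i : Set V) = ⊤)
    (hLper : ∀ i : ℤ, L i = ϖ • L (i + q + 1))
    (hN1 : ∀ i : ℤ, L (i - 1) ≤ N i) (hN2 : ∀ i : ℤ, N i ≤ L i)
    (hNper : ∀ i : ℤ, N i = ϖ • N (i + q + 1)) :
    ∃ W : Submodule K V, ∀ i : ℤ,
      (W.restrictScalars O ⊓ L i) ⊔ L (i - 1) = N i := by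
  classical
  have hϖ0 : ϖ ≠ 0 := hϖ.ne_zero
  have hρ : Function.Injective (algebraMap O K) := IsFractionRing.injective O K
  -- injectivity of scalar multiplication by a nonzero element of O
  have hinj : ∀ c : O, c ≠ 0 → Function.Injective (fun x : V => c • x) := by
    intro c hc x y hxy
    have hc' : algebraMap O K c ≠ 0 := by
      simpa using fun h => hc (hρ (by simpa using h))
    have : algebraMap O K c • x = algebraMap O K c • y := by
      simpa [algebraMap_smul] using hxy
    exact smul_right_injective V hc' this
  have hmem_smul : ∀ (c : O) (M : Submodule O V) (x : V),
      x ∈ c • M ↔ ∃ m ∈ M, c • m = x := by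
    intro c M x
    rw [← SetLike.mem_coe, Submodule.coe_pointwise_smul]
    exact Set.mem_smul_set
  have hsmul_mem_iff : ∀ (c : O), c ≠ 0 → ∀ (M : Submodule O V) (x : V),
      c • x ∈ c • M ↔ x ∈ M := by
    intro c hc M x
    constructor
    · intro h
      obtain ⟨m, hm, hmx⟩ := (hmem_smul c M (c • x)).1 h
      have : m = x := hinj c hc hmx
      rwa [← this]
    · intro h; exact Submodule.smul_mem_pointwise_smul x c M h
  have hsmul_le_iff : ∀ (c : O), c ≠ 0 → ∀ (A B : Submodule O V),
      c • A ≤ c • B ↔ A ≤ B := by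
    intro c hc A B
    constructor
    · intro h x hx
      exact (hsmul_mem_iff c hc B x).1 (h (Submodule.smul_mem_pointwise_smul x c A hx))
    · intro h y hy
      obtain ⟨m, hm, rfl⟩ := (hmem_smul c A y).1 hy
      exact Submodule.smul_mem_pointwise_smul m c B (h hm)
  have hsmul_inf : ∀ (c : O), c ≠ 0 → ∀ (A B : Submodule O V),
      c • (A ⊓ B) = c • A ⊓ c • B := by
    intro c hc A B
    ext x
    constructor
    · intro h
      obtain ⟨m, hm, rfl⟩ := (hmem_smul c _ x).1 h
      exact ⟨Submodule.smul_mem_pointwise_smul m c A hm.1,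
        Submodule.smul_mem_pointwise_smul m c B hm.2⟩
    · rintro ⟨h1, h2⟩
      obtain ⟨m, hm, hmx⟩ := (hmem_smul c A x).1 h1
      obtain ⟨m', hm', hmx'⟩ := (hmem_smul c B x).1 h2
      have : m = m' := hinj c hc (hmx.trans hmx'.symm)
      subst this
      exact (hmem_smul c (A ⊓ B) x).2 ⟨m, ⟨hm, hm'⟩, hmx⟩
  -- basic monotonicity / periodicity facts
  have hLmono' : ∀ {i j : ℤ}, i ≤ j → L i ≤ L j := by
    intro i j h
    exact Int.le_induction (motive := fun j _ => L i ≤ L j) le_rfl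
      (fun n _ ih => ih.trans (hLmono n)) j h
  have hLper' : ∀ i : ℤ, L (i - (q + 1)) = ϖ • L i := by
    intro i
    have h := hLper (i - (q + 1))
    rwa [show i - (q + 1) + q + 1 = i by ring] at h
  have hNper' : ∀ i : ℤ, N (i - (q + 1)) = ϖ • N i := by
    intro i
    have h := hNper (i - (q + 1))
    rwa [show i - (q + 1) + q + 1 = i by ring] at h
  have hNmono : ∀ {i j : ℤ}, i ≤ j → N i ≤ N j := by
    intro i j h
    rcases eq_or_lt_of_le h with rfl | h
    · exact le_rfl
    · exact (hN2 i).trans ((hLmono' (by omega : i ≤ j - 1)).trans (hN1 j))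
  have hunit : ∀ a : O, ¬ ϖ ∣ a → IsUnit a := by
    intro a h
    by_contra hu
    have h1 : a ∈ IsLocalRing.maximalIdeal O := (IsLocalRing.mem_maximalIdeal (x := a)).2 (mem_nonunits_iff.2 hu)
    rw [(IsDiscreteValuationRing.irreducible_iff_uniformizer ϖ).1 hϖ,
      Ideal.mem_span_singleton] at h1
    exact h h1
  -- f.g. of the N's
  have hNfg : ∀ j : ℤ, (N j).FG := by
    intro j
    haveI : IsNoetherian O (L j) := isNoetherian_of_fg_of_noetherian _ (hLfg j)
    have h1 := (IsNoetherian.noetherian (Submodule.comap (L j).subtype (N j))).map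
      (L j).subtype
    rwa [Submodule.map_comap_subtype, inf_eq_right.mpr (hN2 j)] at h1
  -- choose minimal generating sets
  choose S hS1 hS2 hS3 using fun j : ℤ => exists_min_gen (L (j - 1)) (N j) (hN1 j) (hNfg j)
  set T : Finset V := (Finset.Icc (1 : ℤ) (q + 1)).biUnion S with hT
  set W : Submodule K V := Submodule.span K (T : Set V) with hW
  have hST : ∀ j ∈ Finset.Icc (1 : ℤ) (q + 1), ∀ s ∈ S j, s ∈ T := by
    intro j hj s hs
    exact Finset.mem_biUnion.2 ⟨j, hj, hs⟩
  have hsL : ∀ j : ℤ, ∀ s ∈ S j, s ∈ L j := fun j s hs => hN2 j (hS1 j hs)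
  -- the key divisibility claim
  have hdiv : ∀ (i : ℤ) (a : V → O), (∑ s ∈ T, a s • s) ∈ L i →
      ∀ j ∈ Finset.Icc (1 : ℤ) (q + 1), i < j → ∀ s ∈ S j, ϖ ∣ a s := by
    intro i a hw
    by_contra hcon
    push_neg at hcon
    set Bad : Finset ℤ :=
      (Finset.Icc (1 : ℤ) (q + 1)).filter (fun j => i < j ∧ ∃ s ∈ S j, ¬ ϖ ∣ a s) with hBad
    have hBadne : Bad.Nonempty := by
      obtain ⟨j, hj, hij, s, hs, hd⟩ := hcon
      exact ⟨j, Finset.mem_filter.2 ⟨hj, hij, s, hs, hd⟩⟩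
    set j₀ := Bad.max' hBadne with hj₀
    have hj₀mem := Bad.max'_mem hBadne
    rw [Finset.mem_filter] at hj₀mem
    obtain ⟨hj₀Icc, hij₀, s₀, hs₀, hd₀⟩ := hj₀mem
    rw [Finset.mem_Icc] at hj₀Icc
    have hmax : ∀ j ∈ Finset.Icc (1 : ℤ) (q + 1), j₀ < j → ∀ s ∈ S j, ϖ ∣ a s := by
      intro j hj hjj s hs
      by_contra hd
      have : j ∈ Bad := Finset.mem_filter.2 ⟨hj, lt_trans hij₀ hjj, s, hs, hd⟩
      exact absurd (Bad.le_max' j this) (not_le.2 hjj)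
    -- the partial sum over S j₀ lands in L (j₀ - 1)
    have hsub : S j₀ ⊆ T := fun s hs => hST j₀ (Finset.mem_Icc.2 hj₀Icc) s hs
    have hsplit : ∑ s ∈ T \ S j₀, a s • s + ∑ s ∈ S j₀, a s • s = ∑ s ∈ T, a s • s :=
      Finset.sum_sdiff hsub
    have hsdiff : ∑ s ∈ T \ S j₀, a s • s ∈ L (j₀ - 1) := by
      apply Submodule.sum_mem
      intro s hsmem
      rw [Finset.mem_sdiff] at hsmem
      obtain ⟨hsT, hsnot⟩ := hsmem
      obtain ⟨j, hj, hsj⟩ := Finset.mem_biUnion.1 hsT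
      rcases lt_or_ge j j₀ with hlt | hle
      · exact Submodule.smul_mem _ _ (hLmono' (by omega) (hsL j s hsj))
      · have hne : j₀ < j := lt_of_le_of_ne hle (fun h => hsnot (h ▸ hsj))
        obtain ⟨b, hb⟩ := hmax j hj hne s hsj
        rw [hb, mul_smul]
        have h1 : b • s ∈ L (q + 1) := Submodule.smul_mem _ _
          (hLmono' (by rw [Finset.mem_Icc] at hj; omega) (hsL j s hsj))
        have h2 : ϖ • (b • s) ∈ ϖ • L (q + 1) := Submodule.smul_mem_pointwise_smul _ _ _ h1
        have h3 : L (0 : ℤ) = ϖ • L (q + 1) := by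
          have h := hLper 0
          rwa [show (0 : ℤ) + q + 1 = (q : ℤ) + 1 by ring] at h
        rw [← h3] at h2
        exact hLmono' (by omega) h2
    have hin : ∑ s ∈ S j₀, a s • s ∈ L (j₀ - 1) := by
      have h4 : ∑ s ∈ S j₀, a s • s
          = (∑ s ∈ T, a s • s) - ∑ s ∈ T \ S j₀, a s • s := by
        rw [← hsplit]; abel
      rw [h4]
      exact Submodule.sub_mem _ (hLmono' (by omega) hw) hsdiff
    exact hS3 j₀ a hin s₀ hs₀ (hunit _ hd₀)
  -- the core claim: integral combinations landing in L i land in N i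
  have base : ∀ i : ℤ, 1 ≤ i → ∀ a : V → O,
      (∑ s ∈ T, a s • s) ∈ L i → (∑ s ∈ T, a s • s) ∈ N i := by
    intro i hi a hw
    apply Submodule.sum_mem
    intro s hs
    obtain ⟨j, hj, hsj⟩ := Finset.mem_biUnion.1 hs
    rcases le_or_gt j i with hji | hij
    · exact hNmono hji (Submodule.smul_mem _ _ (hS1 j hsj))
    · obtain ⟨b, hb⟩ := hdiv i a hw j hj hij s hsj
      rw [hb, mul_smul]
      have h1 : b • s ∈ L (q + 1) := Submodule.smul_mem _ _
        (hLmono' (by rw [Finset.mem_Icc] at hj; omega) (hsL j s hsj))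
      have h2 : ϖ • (b • s) ∈ ϖ • L (q + 1) := Submodule.smul_mem_pointwise_smul _ _ _ h1
      have h3 : L (0 : ℤ) = ϖ • L (q + 1) := by
        have h := hLper 0
        rwa [show (0 : ℤ) + q + 1 = (q : ℤ) + 1 by ring] at h
      rw [← h3] at h2
      exact hN1 i (hLmono' (by omega) h2)
  have key : ∀ (k : ℕ) (i : ℤ), 1 - i ≤ (k : ℤ) → ∀ a : V → O,
      (∑ s ∈ T, a s • s) ∈ L i → (∑ s ∈ T, a s • s) ∈ N i := by
    intro k
    induction k with
    | zero => intro i hi a hw; exact base i (by omega) a hw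
    | succ k ih =>
      intro i hi a hw
      rcases le_or_gt 1 i with h1i | h1i
      · exact base i h1i a hw
      · -- i ≤ 0 : every coefficient is divisible by ϖ
        have hall : ∀ s ∈ T, ϖ ∣ a s := by
          intro s hs
          obtain ⟨j, hj, hsj⟩ := Finset.mem_biUnion.1 hs
          exact hdiv i a hw j hj (by rw [Finset.mem_Icc] at hj; omega) s hsj
        set b : V → O := fun s => if h : ϖ ∣ a s then h.choose else 0 with hbdef
        have hb : ∀ s ∈ T, a s = ϖ * b s := by
          intro s hs
          have h := hall s hs
          simp only [hbdef, dif_pos h]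
          exact h.choose_spec
        have hw'eq : ∑ s ∈ T, a s • s = ϖ • ∑ s ∈ T, b s • s := by
          rw [Finset.smul_sum]
          exact Finset.sum_congr rfl fun s hs => by rw [hb s hs, mul_smul]
        have hmem : ϖ • (∑ s ∈ T, b s • s) ∈ ϖ • L (i + q + 1) := by
          rw [← hLper i, ← hw'eq]; exact hw
        have hw' : (∑ s ∈ T, b s • s) ∈ L (i + q + 1) :=
          (hsmul_mem_iff ϖ hϖ0 _ _).1 hmem
        have hN' : (∑ s ∈ T, b s • s) ∈ N (i + q + 1) :=
          ih (i + q + 1) (by omega) b hw'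
        rw [hw'eq, hNper i]
        exact Submodule.smul_mem_pointwise_smul _ _ _ hN'
  -- powers
  have hLpow : ∀ (n : ℕ) (i : ℤ), ϖ ^ n • L i = L (i - n * (q + 1)) := by
    intro n
    induction n with
    | zero => intro i; simp
    | succ n ih =>
      intro i
      rw [pow_succ', mul_smul, ih i, ← hLper' (i - n * (q + 1))]
      congr 1
      push_cast
      ring
  have hNpow : ∀ (n : ℕ) (i : ℤ), ϖ ^ n • N i = N (i - n * (q + 1)) := by
    intro n
    induction n with
    | zero => intro i; simp
    | succ n ih =>
      intro i
      rw [pow_succ', mul_smul, ih i, ← hNper' (i - n * (q + 1))]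
      congr 1
      push_cast
      ring
  -- the ≤ direction
  have hWle : ∀ i : ℤ, W.restrictScalars O ⊓ L i ≤ N i := by
    intro i x hx
    obtain ⟨hxW, hxL⟩ := hx
    have hxW' : x ∈ Submodule.span K (T : Set V) := hxW
    obtain ⟨c, _, hc⟩ := Submodule.mem_span_finset.1 hxW'
    obtain ⟨b, hb⟩ := IsLocalization.exist_integer_multiples (nonZeroDivisors O) T c
    have hb0 : (b : O) ≠ 0 := nonZeroDivisors.coe_ne_zero b
    obtain ⟨n, u, hnu⟩ := IsDiscreteValuationRing.associated_pow_irreducible hb0 hϖ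
    have hbex : ∀ s ∈ T, ∃ r : O, algebraMap O K r = (b : O) • c s := fun s hs => hb s hs
    set a : V → O := fun s => if hs : s ∈ T then (hbex s hs).choose else 0 with ha
    have haspec : ∀ s ∈ T, algebraMap O K (a s) = (b : O) • c s := by
      intro s hs
      simp only [ha, dif_pos hs]
      exact (hbex s hs).choose_spec
    have hsum : ϖ ^ n • x = ∑ s ∈ T, ((u : O) * a s) • s := by
      rw [← hc, Finset.smul_sum]
      refine Finset.sum_congr rfl fun s hs => ?_
      have h1 : algebraMap O K (a s) = algebraMap O K (b : O) * c s := by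
        rw [haspec s hs, Algebra.smul_def]
      rw [← algebraMap_smul K (ϖ ^ n) (c s • s), smul_smul,
        ← algebraMap_smul K ((u : O) * a s) s, ← hnu, map_mul, map_mul, h1]
      congr 1
      ring
    have h1 : ϖ ^ n • x ∈ L (i - n * (q + 1)) := by
      have h := Submodule.smul_mem_pointwise_smul x (ϖ ^ n) (L i) hxL
      rwa [hLpow n i] at h
    have h2 : ϖ ^ n • x ∈ N (i - n * (q + 1)) := by
      rw [hsum]
      refine key (1 - (i - n * (q + 1))).toNat _ (Int.self_le_toNat _) _ ?_
      rw [← hsum]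
      exact h1
    have h3 : ϖ ^ n • x ∈ ϖ ^ n • N i := by rwa [hNpow n i] 
    exact (hsmul_mem_iff (ϖ ^ n) (pow_ne_zero n hϖ0) (N i) x).1 h3
  -- the ≥ direction, window case
  have hQwin : ∀ j ∈ Finset.Icc (1 : ℤ) (q + 1),
      N j ≤ (W.restrictScalars O ⊓ L j) ⊔ L (j - 1) := by
    intro j hj
    rw [← hS2 j]
    apply sup_le _ le_sup_right
    refine le_trans (le_inf ?_ ?_) le_sup_left
    · rw [Submodule.span_le]
      intro s hs
      exact Submodule.subset_span (Finset.mem_coe.2 (hST j hj s hs))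
    · rw [Submodule.span_le]
      intro s hs
      exact hsL j s hs
  have hWfix : ϖ • W.restrictScalars O = W.restrictScalars O := by
    have hπ0 : algebraMap O K ϖ ≠ 0 := by
      simpa using fun h => hϖ0 (hρ (by simpa using h))
    apply le_antisymm
    · intro x hx
      obtain ⟨m, hm, rfl⟩ := (hmem_smul ϖ _ x).1 hx
      show ϖ • m ∈ W
      rw [← algebraMap_smul K ϖ m]
      exact W.smul_mem _ hm
    · intro x hx
      refine (hmem_smul ϖ _ x).2 ⟨(algebraMap O K ϖ)⁻¹ • x, W.smul_mem _ hx, ?_⟩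
      rw [← algebraMap_smul K ϖ, smul_inv_smul₀ hπ0]
  -- periodicity of the ≥ statement
  have hQiff : ∀ i : ℤ,
      (N (i + q + 1) ≤ (W.restrictScalars O ⊓ L (i + q + 1)) ⊔ L (i + q)) ↔
      (N i ≤ (W.restrictScalars O ⊓ L i) ⊔ L (i - 1)) := by
    intro i
    have hLm1 : L (i - 1) = ϖ • L (i + q) := by
      have h := hLper (i - 1)
      rwa [show i - 1 + q + 1 = i + q by ring] at h
    rw [← hsmul_le_iff ϖ hϖ0, Submodule.smul_sup', hsmul_inf ϖ hϖ0, hWfix,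
      ← hLper i, ← hNper i, ← hLm1]
  have hQ : ∀ i : ℤ, N i ≤ (W.restrictScalars O ⊓ L i) ⊔ L (i - 1) := by
    have hwin : ∀ m : ℤ, ∀ j : ℤ, 1 ≤ j → j ≤ (q : ℤ) + 1 →
        N (j + m * (q + 1)) ≤
          (W.restrictScalars O ⊓ L (j + m * (q + 1))) ⊔ L (j + m * (q + 1) - 1) := by
      intro m
      induction m using Int.induction_on with
      | zero =>
        intro j h1 h2
        simpa using hQwin j (Finset.mem_Icc.2 ⟨h1, h2⟩)
      | succ n ihn =>
        intro j h1 h2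
        have h := (hQiff (j + (n : ℤ) * (q + 1))).2 (ihn j h1 h2)
        have e1 : j + ((n : ℤ) + 1) * (q + 1) = j + (n : ℤ) * (q + 1) + q + 1 := by ring
        have e2 : j + ((n : ℤ) + 1) * (q + 1) - 1 = j + (n : ℤ) * (q + 1) + q := by ring
        rw [e2, e1]
        exact h
      | pred n ihn =>
        intro j h1 h2
        have h := ihn j h1 h2
        have e3 : j + (-(n : ℤ)) * (q + 1) = j + (-(n : ℤ) - 1) * (q + 1) + q + 1 := by ring
        have e4 : j + (-(n : ℤ)) * (q + 1) - 1 = j + (-(n : ℤ) - 1) * (q + 1) + q := by ring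
        rw [e4, e3] at h
        exact (hQiff _).1 h
    intro i
    have hnz : ((q : ℤ) + 1) ≠ 0 := by omega
    have hpos : (0 : ℤ) < (q : ℤ) + 1 := by omega
    have h1 := Int.mul_ediv_add_emod (i - 1) ((q : ℤ) + 1)
    have hj1 : 1 ≤ (i - 1) % ((q : ℤ) + 1) + 1 := by
      have := Int.emod_nonneg (i - 1) hnz
      omega
    have hj2 : (i - 1) % ((q : ℤ) + 1) + 1 ≤ (q : ℤ) + 1 := by
      have := Int.emod_lt_of_pos (i - 1) hpos
      omega
    have h2 := hwin ((i - 1) / ((q : ℤ) + 1)) ((i - 1) % ((q : ℤ) + 1) + 1) hj1 hj2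
    have hieq : (i - 1) % ((q : ℤ) + 1) + 1 + ((i - 1) / ((q : ℤ) + 1)) * ((q : ℤ) + 1) = i := by
      have hcomm : ((i - 1) / ((q : ℤ) + 1)) * ((q : ℤ) + 1)
          = ((q : ℤ) + 1) * ((i - 1) / ((q : ℤ) + 1)) := mul_comm _ _
      linarith [h1, hcomm]
    rw [hieq] at h2
    exact h2
  exact ⟨W, fun i => le_antisymm (sup_le ((hWle i)) (hN1 i)) (hQ i)⟩
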